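/- (Schmidt–Sprindžuk lemma, Theorem 1.4.) Let (X, μ) be a probability space and (B_n)_{n≥1} a sequence of measurable subsets of X with ∑_{n=1}^∞ μ(B_n) = ∞. Suppose there exists a constant C > 0 such that for all integers 1 ≤ M ≤ N one has ∑_{m,n=M}^N ( μ(B_m ∩ B_n) − μ(B_m)μ(B_n) ) ≤ C·∑_{n=M}^N μ(B_n). Then for μ-almost every x ∈ X, setting S_N(x) = #{1 ≤ n ≤ N : x ∈ B_n} and E_N = ∑_{n=1}^N μ(B_n), one has S_N(x)/E_N → 1 as N → ∞. (Applied to B_n = T^{-n}(A_n) for a measure-preserving map T, this says that any sequence (A_n) satisfying condition (SP) with divergent sum of measures is strongly Borel–Cantelli.) -/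

import Mathlib

open MeasureTheory Filter
open scoped Classical


private lemma ss_prod_integral {X : Type*} [MeasurableSpace X] (μ : Measure X)
    [IsProbabilityMeasure μ]
    (B : ℕ → Set X) (hBmeas : ∀ n, MeasurableSet (B n)) (m n : ℕ) :
    Integrable (fun x => ((B m).indicator 1 x - (μ (B m)).toReal) *
      ((B n).indicator 1 x - (μ (B n)).toReal)) μ ∧
    ∫ x, ((B m).indicator 1 x - (μ (B m)).toReal) *
      ((B n).indicator 1 x - (μ (B n)).toReal) ∂μ
      = (μ (B m ∩ B n)).toReal - (μ (B m)).toReal * (μ (B n)).toReal := by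
  have hfun : (fun x => ((B m).indicator 1 x - (μ (B m)).toReal) *
      ((B n).indicator 1 x - (μ (B n)).toReal))
      = fun x => (B m ∩ B n).indicator (1 : X → ℝ) x
        - (μ (B m)).toReal * (B n).indicator 1 x
        - ((μ (B n)).toReal * (B m).indicator 1 x
          - (μ (B m)).toReal * (μ (B n)).toReal) := by
    funext x
    have h : (B m ∩ B n).indicator (1 : X → ℝ) x
        = (B m).indicator 1 x * (B n).indicator 1 x := by
      rw [Set.inter_indicator_one]; rfl
    rw [h]; ring
  have hindint : ∀ k, Integrable ((B k).indicator (1 : X → ℝ)) μ := fun k =>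
    (integrable_const (1:ℝ)).indicator (hBmeas k)
  have hii : Integrable ((B m ∩ B n).indicator (1 : X → ℝ)) μ :=
    (integrable_const (1:ℝ)).indicator ((hBmeas m).inter (hBmeas n))
  refine ⟨?_, ?_⟩
  · rw [hfun]
    exact (hii.sub ((hindint n).const_mul _)).sub
      (((hindint m).const_mul _).sub (integrable_const _))
  · have i1 : Integrable (fun x => (B m ∩ B n).indicator (1:X→ℝ) x
        - (μ (B m)).toReal * (B n).indicator 1 x) μ :=
      hii.sub ((hindint n).const_mul _)
    have i2 : Integrable (fun x => (μ (B n)).toReal * (B m).indicator (1:X→ℝ) x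
        - (μ (B m)).toReal * (μ (B n)).toReal) μ :=
      ((hindint m).const_mul _).sub (integrable_const _)
    have i3 : Integrable (fun x => (μ (B n)).toReal * (B m).indicator (1:X→ℝ) x) μ :=
      (hindint m).const_mul _
    have i4 : Integrable (fun x => (μ (B m)).toReal * (B n).indicator (1:X→ℝ) x) μ :=
      (hindint n).const_mul _
    rw [hfun, integral_sub i1 i2, integral_sub hii i4,
      integral_sub i3 (integrable_const _),
      MeasureTheory.integral_const_mul, MeasureTheory.integral_const_mul, integral_const,
      integral_indicator_one ((hBmeas m).inter (hBmeas n)),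
      integral_indicator_one (hBmeas m), integral_indicator_one (hBmeas n)]
    simp [Measure.real]
    ring

private lemma ss_second_moment {X : Type*} [MeasurableSpace X] (μ : Measure X)
    [IsProbabilityMeasure μ] (B : ℕ → Set X) (hBmeas : ∀ n, MeasurableSet (B n))
    (I : Finset ℕ) :
    Integrable (fun x => (∑ n ∈ I, ((B n).indicator 1 x - (μ (B n)).toReal))^2) μ ∧
    ∫ x, (∑ n ∈ I, ((B n).indicator 1 x - (μ (B n)).toReal))^2 ∂μ
      = ∑ m ∈ I, ∑ n ∈ I,
        ((μ (B m ∩ B n)).toReal - (μ (B m)).toReal * (μ (B n)).toReal) := by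
  have hfun : (fun x => (∑ n ∈ I, ((B n).indicator 1 x - (μ (B n)).toReal))^2)
      = fun x => ∑ m ∈ I, ∑ n ∈ I, ((B m).indicator 1 x - (μ (B m)).toReal) *
          ((B n).indicator 1 x - (μ (B n)).toReal) := by
    funext x; rw [sq, Finset.sum_mul_sum]
  constructor
  · rw [hfun]
    exact integrable_finset_sum _ fun m _ => integrable_finset_sum _ fun n _ =>
      (ss_prod_integral μ B hBmeas m n).1
  · rw [hfun, integral_finset_sum _ (fun m _ => integrable_finset_sum _ fun n _ =>
      (ss_prod_integral μ B hBmeas m n).1)]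
    refine Finset.sum_congr rfl fun m _ => ?_
    rw [integral_finset_sum _ (fun n _ => (ss_prod_integral μ B hBmeas m n).1)]
    exact Finset.sum_congr rfl fun n _ => (ss_prod_integral μ B hBmeas m n).2

private lemma ss_cheb {X : Type*} [MeasurableSpace X] (μ : Measure X)
    [IsProbabilityMeasure μ]
    {f : X → ℝ} (hf : Integrable (fun x => (f x)^2) μ) {a : ℝ} (ha : 0 < a) :
    (μ {x | a ≤ |f x|}).toReal ≤ (∫ x, (f x)^2 ∂μ) / a^2 := by
  have key := mul_meas_ge_le_integral_of_nonneg
    (ae_of_all μ fun x => sq_nonneg (f x)) hf (a^2)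
  have hsub : {x | a ≤ |f x|} ⊆ {x | a^2 ≤ (f x)^2} := by
    intro x hx
    have h1 : a^2 ≤ |f x|^2 := pow_le_pow_left₀ ha.le hx 2
    simpa [sq_abs] using h1
  have hmono : (μ {x | a ≤ |f x|}).toReal ≤ (μ {x | a^2 ≤ (f x)^2}).toReal :=
    ENNReal.toReal_mono (measure_ne_top μ _) (measure_mono hsub)
  have ha2 : 0 < a^2 := by positivity
  rw [le_div_iff₀ ha2]
  calc (μ {x | a ≤ |f x|}).toReal * a^2
      ≤ (μ {x | a^2 ≤ (f x)^2}).toReal * a^2 :=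
        mul_le_mul_of_nonneg_right hmono ha2.le
    _ = a^2 * (μ {x | a^2 ≤ (f x)^2}).toReal := mul_comm _ _
    _ ≤ ∫ x, (f x)^2 ∂μ := key

/-- **Schmidt–Sprindžuk lemma (Theorem 1.4).**
If `(B n)` are measurable subsets of a probability space with divergent sum of
measures, satisfying the (SP) correlation condition, then for a.e. `x` the
counting function `S_N(x) = #{1 ≤ n ≤ N : x ∈ B n}` satisfies `S_N/E_N → 1`,
where `E_N = ∑_{n=1}^N μ(B n)`. -/
theorem schmidt_sprindzuk
    {X : Type*} [MeasurableSpace X] (μ : Measure X) [IsProbabilityMeasure μ]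
    (B : ℕ → Set X) (hBmeas : ∀ n, MeasurableSet (B n))
    (hdiv : Tendsto (fun N : ℕ => ∑ n ∈ Finset.Icc 1 N, (μ (B n)).toReal) atTop atTop)
    (C : ℝ) (hC : 0 < C)
    (hSP : ∀ M N : ℕ, 1 ≤ M → M ≤ N →
      ∑ m ∈ Finset.Icc M N, ∑ n ∈ Finset.Icc M N,
        ((μ (B m ∩ B n)).toReal - (μ (B m)).toReal * (μ (B n)).toReal)
      ≤ C * ∑ n ∈ Finset.Icc M N, (μ (B n)).toReal) :
    ∀ᵐ x ∂μ, Tendsto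
      (fun N : ℕ => (((Finset.Icc 1 N).filter (fun n => x ∈ B n)).card : ℝ) /
        ∑ n ∈ Finset.Icc 1 N, (μ (B n)).toReal) atTop (nhds 1) := by
  classical
  -- basic notation
  let e : ℕ → ℝ := fun n => (μ (B n)).toReal
  let E : ℕ → ℝ := fun N => ∑ n ∈ Finset.Icc 1 N, e n
  let S : ℕ → X → ℝ := fun N x => (((Finset.Icc 1 N).filter (fun n => x ∈ B n)).card : ℝ)
  let D : ℕ → X → ℝ := fun N x => S N x - E N
  have he0 : ∀ n, 0 ≤ e n := fun n => ENNReal.toReal_nonneg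
  have he1 : ∀ n, e n ≤ 1 := fun n => by
    simpa using ENNReal.toReal_mono ENNReal.one_ne_top (prob_le_one (μ := μ) (s := B n))
  have hEmono : Monotone E := fun a b hab =>
    Finset.sum_le_sum_of_subset_of_nonneg (Finset.Icc_subset_Icc_right hab)
      (fun n _ _ => he0 n)
  have hE0 : ∀ N, 0 ≤ E N := fun N => Finset.sum_nonneg fun n _ => he0 n
  have hEzero : E 0 = 0 := by simp [E]
  have hEleN : ∀ N : ℕ, E N ≤ N := by
    intro N
    calc E N ≤ ∑ _n ∈ Finset.Icc 1 N, (1:ℝ) := Finset.sum_le_sum fun n _ => he1 n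
      _ = N := by simp
  have hSsum : ∀ N x, S N x = ∑ n ∈ Finset.Icc 1 N, (B n).indicator (1:X→ℝ) x := by
    intro N x
    simp [S, Set.indicator_apply, Finset.sum_boole]
  have hSmono : ∀ x, Monotone fun N => S N x := by
    intro x a b hab
    dsimp only [S]
    exact Nat.cast_le.2 (Finset.card_le_card
      (Finset.filter_subset_filter _ (Finset.Icc_subset_Icc_right hab)))
  have hS0 : ∀ N x, 0 ≤ S N x := fun N x => by positivity
  have hD : ∀ N x, D N x = ∑ n ∈ Finset.Icc 1 N, ((B n).indicator 1 x - e n) := by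
    intro N x
    simp only [D, hSsum, E, Finset.sum_sub_distrib]
  -- second moment bound
  have hmom : ∀ N : ℕ, 1 ≤ N → Integrable (fun x => (D N x)^2) μ ∧
      ∫ x, (D N x)^2 ∂μ ≤ C * E N := by
    intro N hN
    have h := ss_second_moment μ B hBmeas (Finset.Icc 1 N)
    have hfe : (fun x => (D N x)^2)
        = fun x => (∑ n ∈ Finset.Icc 1 N, ((B n).indicator 1 x - (μ (B n)).toReal))^2 := by
      funext x; rw [hD]
    refine ⟨hfe ▸ h.1, ?_⟩
    rw [hfe, h.2]
    exact hSP 1 N le_rfl hN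
  -- the subsequence N_k
  have hexists : ∀ k : ℕ, ∃ N, (k:ℝ)^2 ≤ E N := fun k =>
    (hdiv.eventually_ge_atTop ((k:ℝ)^2)).exists
  let Nk : ℕ → ℕ := fun k => Nat.find (hexists k)
  have hNk_spec : ∀ k : ℕ, (k:ℝ)^2 ≤ E (Nk k) := fun k => Nat.find_spec (hexists k)
  have hNk_mono : Monotone Nk := by
    intro a b hab
    exact Nat.find_mono fun N hN =>
      le_trans (pow_le_pow_left₀ (by positivity) (Nat.cast_le.2 hab) 2) hN
  have hNk0 : Nk 0 = 0 := by
    have : ((0:ℕ):ℝ)^2 ≤ E 0 := by simp [hEzero]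
    simpa [Nk] using Nat.find_eq_zero (hexists 0) |>.2 this
  have hNk_pos : ∀ k, 1 ≤ k → 1 ≤ Nk k := by
    intro k hk
    rcases Nat.eq_zero_or_pos (Nk k) with h | h
    · exfalso
      have hs := hNk_spec k
      rw [h, hEzero] at hs
      have hk' : (1:ℝ) ≤ (k:ℝ) := by exact_mod_cast hk
      nlinarith
    · exact h
  have hEposk : ∀ k, 1 ≤ k → 0 < E (Nk k) := by
    intro k hk
    have h1 : (1:ℝ) ≤ (k:ℝ)^2 := by
      have : (1:ℝ) ≤ (k:ℝ) := by exact_mod_cast hk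
      nlinarith
    linarith [hNk_spec k]
  have hNk_upper : ∀ k, 1 ≤ k → E (Nk k) ≤ (k:ℝ)^2 + 1 := by
    intro k hk
    obtain ⟨m, hm⟩ : ∃ m, Nk k = m + 1 := ⟨Nk k - 1, by have := hNk_pos k hk; omega⟩
    have hlt : m < Nk k := by rw [hm]; exact m.lt_succ_self
    have h2 : ¬ ((k:ℝ)^2 ≤ E m) := Nat.find_min (hexists k) hlt
    push_neg at h2
    have h3 : E (m + 1) = E m + e (m + 1) := by
      simp [E, Finset.sum_Icc_succ_top (Nat.le_add_left 1 m)]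
    rw [hm, h3]
    have := he1 (m + 1)
    linarith
  have hNk_ge : ∀ k : ℕ, k ≤ Nk k := by
    intro k
    rcases Nat.eq_zero_or_pos k with h | h
    · simp [h]
    have hk' : (1:ℝ) ≤ (k:ℝ) := by exact_mod_cast h
    have h1 : (k:ℝ) ≤ (k:ℝ)^2 := by nlinarith
    have h2 : (k:ℝ) ≤ E (Nk k) := le_trans h1 (hNk_spec k)
    have h3 : (k:ℝ) ≤ (Nk k : ℝ) := le_trans h2 (hEleN _)
    exact_mod_cast h3
  have hNk_tendsto : Tendsto Nk atTop atTop :=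
    tendsto_atTop_mono hNk_ge tendsto_id
  -- Borel–Cantelli along the subsequence
  have hbc : ∀ j : ℕ, ∀ᵐ x ∂μ, ∀ᶠ k in atTop,
      |D (Nk k) x| < (1/((j:ℝ)+1)) * E (Nk k) := by
    intro j
    set εj : ℝ := 1/((j:ℝ)+1) with hεj
    have hεpos : 0 < εj := by positivity
    set s : ℕ → Set X := fun k => {x | εj * E (Nk (k+1)) ≤ |D (Nk (k+1)) x|} with hsdef
    have hbound : ∀ k : ℕ, μ (s k) ≤ ENNReal.ofReal ((C/εj^2) * (1/((k+1:ℕ):ℝ)^2)) := by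
      intro k
      have hk1 : 1 ≤ k + 1 := Nat.le_add_left 1 k
      have hEpos := hEposk (k+1) hk1
      have ha : 0 < εj * E (Nk (k+1)) := mul_pos hεpos hEpos
      have hcheb := ss_cheb μ (hmom (Nk (k+1)) (hNk_pos _ hk1)).1 ha
      have h2 : (∫ x, (D (Nk (k+1)) x)^2 ∂μ) / (εj * E (Nk (k+1)))^2
          ≤ (C * E (Nk (k+1))) / (εj * E (Nk (k+1)))^2 := by
        gcongr
        exact (hmom (Nk (k+1)) (hNk_pos _ hk1)).2
      have h3 : (C * E (Nk (k+1))) / (εj * E (Nk (k+1)))^2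
          = C / (εj^2 * E (Nk (k+1))) := by
        field_simp
      have hk2 : ((k+1:ℕ):ℝ)^2 ≤ E (Nk (k+1)) := hNk_spec (k+1)
      have hk2pos : (0:ℝ) < ((k+1:ℕ):ℝ)^2 := by positivity
      have h4 : C / (εj^2 * E (Nk (k+1))) ≤ C / (εj^2 * ((k+1:ℕ):ℝ)^2) := by
        gcongr
      have h5 : C / (εj^2 * ((k+1:ℕ):ℝ)^2) = (C/εj^2) * (1/((k+1:ℕ):ℝ)^2) := by
        field_simp
      have htotal : (μ (s k)).toReal ≤ (C/εj^2) * (1/((k+1:ℕ):ℝ)^2) := by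
        rw [← h5]
        exact le_trans hcheb (le_trans h2 (le_of_eq h3 |>.trans h4))
      rw [ENNReal.le_ofReal_iff_toReal_le (measure_ne_top μ _) (by positivity)]
      exact htotal
    have hsummable : Summable (fun k : ℕ => (C/εj^2) * (1/((k+1:ℕ):ℝ)^2)) := by
      apply Summable.mul_left
      have h := Real.summable_one_div_nat_pow (p := 2) |>.2 one_lt_two
      exact_mod_cast (summable_nat_add_iff 1).2 h
    have htsum : (∑' k : ℕ, μ (s k)) ≠ ⊤ := by
      have hle := ENNReal.tsum_le_tsum hbound
      have heq : (∑' k : ℕ, ENNReal.ofReal ((C/εj^2) * (1/((k+1:ℕ):ℝ)^2)))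
          = ENNReal.ofReal (∑' k : ℕ, (C/εj^2) * (1/((k+1:ℕ):ℝ)^2)) :=
        (ENNReal.ofReal_tsum_of_nonneg (fun k => by positivity) hsummable).symm
      exact ne_top_of_le_ne_top (by rw [heq]; exact ENNReal.ofReal_ne_top) hle
    filter_upwards [ae_eventually_notMem htsum] with x hx
    rw [eventually_atTop] at hx ⊢
    obtain ⟨K, hK⟩ := hx
    refine ⟨K + 1, fun k hk => ?_⟩
    obtain ⟨m, rfl⟩ : ∃ m, k = m + 1 := ⟨k - 1, by omega⟩
    have hm := hK m (by omega)
    simp only [hsdef, Set.mem_setOf_eq, not_le] at hm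
    exact hm
  have hae : ∀ᵐ x ∂μ, ∀ j : ℕ, ∀ᶠ k in atTop,
      |D (Nk k) x| < (1/((j:ℝ)+1)) * E (Nk k) := ae_all_iff.2 hbc
  -- ratio convergence
  have hratio : Tendsto (fun k => E (Nk (k+1)) / E (Nk k)) atTop (nhds 1) := by
    have h0 : Tendsto (fun k : ℕ => 1/(k:ℝ)) atTop (nhds 0) :=
      tendsto_one_div_atTop_nhds_zero_nat
    have hupper : Tendsto (fun k : ℕ => 1 + (2*(1/(k:ℝ)) + 2*(1/(k:ℝ))^2)) atTop
        (nhds 1) := by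
      have h1 : Tendsto (fun k : ℕ => 1 + (2*(1/(k:ℝ)) + 2*(1/(k:ℝ))^2)) atTop
          (nhds (1 + (2*0 + 2*0^2))) :=
        tendsto_const_nhds.add ((h0.const_mul 2).add ((h0.pow 2).const_mul 2))
      convert h1 using 2
      norm_num
    refine tendsto_of_tendsto_of_tendsto_of_le_of_le' tendsto_const_nhds hupper ?_ ?_
    · filter_upwards [eventually_ge_atTop 1] with k hk
      have h2 := hEposk k hk
      rw [le_div_iff₀ h2, one_mul]
      exact hEmono (hNk_mono (Nat.le_succ k))
    · filter_upwards [eventually_ge_atTop 1] with k hk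
      have hkpos := hEposk k hk
      have hk' : (1:ℝ) ≤ (k:ℝ) := by exact_mod_cast hk
      have hkR : (0:ℝ) < (k:ℝ) := by linarith
      have hb : E (Nk (k+1)) ≤ ((k+1:ℕ):ℝ)^2 + 1 := hNk_upper (k+1) (by omega)
      have hc : (k:ℝ)^2 ≤ E (Nk k) := hNk_spec k
      have h3 : E (Nk (k+1)) / E (Nk k) ≤ (((k+1:ℕ):ℝ)^2 + 1) / (k:ℝ)^2 :=
        div_le_div₀ (by positivity) hb (pow_pos hkR 2) hc
      have h4 : (((k+1:ℕ):ℝ)^2 + 1) / (k:ℝ)^2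
          = 1 + (2*(1/(k:ℝ)) + 2*(1/(k:ℝ))^2) := by
        push_cast
        field_simp
        ring
      rw [h4] at h3
      exact h3
  have hratio' : Tendsto (fun k => E (Nk k) / E (Nk (k+1))) atTop (nhds 1) := by
    have := hratio.inv₀ one_ne_zero
    simpa [inv_div] using this
  -- the interpolation index
  let kN : ℕ → ℕ := fun N => Nat.findGreatest (fun k => Nk k ≤ N) N
  have hkN_le : ∀ N, Nk (kN N) ≤ N := fun N =>
    Nat.findGreatest_spec (P := fun k => Nk k ≤ N) (Nat.zero_le N) (by simp [hNk0])
  have hkN_lt : ∀ N, N < Nk (kN N + 1) := by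
    intro N
    by_contra h
    push_neg at h
    have hle : kN N + 1 ≤ N := by
      have h1 : ((kN N + 1 : ℕ):ℝ)^2 ≤ E N := le_trans (hNk_spec _) (hEmono h)
      have hge1 : (1:ℝ) ≤ ((kN N + 1 : ℕ):ℝ) := by exact_mod_cast Nat.succ_le_succ (Nat.zero_le (kN N))
      have h2 : ((kN N + 1 : ℕ):ℝ) ≤ ((kN N + 1 : ℕ):ℝ)^2 := by nlinarith
      have h3 : ((kN N + 1 : ℕ):ℝ) ≤ (N:ℝ) := le_trans h2 (le_trans h1 (hEleN N))
      exact_mod_cast h3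
    exact Nat.findGreatest_is_greatest (lt_add_one _) hle h
  have hkN_tendsto : Tendsto kN atTop atTop := by
    rw [tendsto_atTop_atTop]
    intro b
    refine ⟨max (Nk b) b, fun a ha => ?_⟩
    exact Nat.le_findGreatest (le_trans (le_max_right _ _) ha)
      (le_trans (le_max_left _ _) ha)
  -- conclusion
  filter_upwards [hae] with x hx
  have hsubconv : Tendsto (fun k => S (Nk k) x / E (Nk k)) atTop (nhds 1) := by
    rw [Metric.tendsto_atTop]
    intro ε hε
    obtain ⟨j, hj⟩ := exists_nat_one_div_lt hε
    have hxj := hx j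
    rw [eventually_atTop] at hxj
    obtain ⟨K, hK⟩ := hxj
    refine ⟨max K 1, fun k hk => ?_⟩
    have hk1 : 1 ≤ k := le_trans (le_max_right K 1) hk
    have hKk := hK k (le_trans (le_max_left K 1) hk)
    have hEp := hEposk k hk1
    rw [Real.dist_eq]
    have habs : |S (Nk k) x / E (Nk k) - 1| = |D (Nk k) x| / E (Nk k) := by
      rw [div_sub_one hEp.ne', abs_div, abs_of_pos hEp]
    rw [habs, div_lt_iff₀ hEp]
    calc |D (Nk k) x| < (1/((j:ℝ)+1)) * E (Nk k) := hKk
      _ ≤ ε * E (Nk k) := mul_le_mul_of_nonneg_right hj.le hEp.le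
  have hfL : Tendsto (fun k => (S (Nk k) x / E (Nk k)) * (E (Nk k) / E (Nk (k+1))))
      atTop (nhds 1) := by
    simpa using hsubconv.mul hratio'
  have hfU : Tendsto (fun k => (S (Nk (k+1)) x / E (Nk (k+1))) * (E (Nk (k+1)) / E (Nk k)))
      atTop (nhds 1) := by
    have hshift : Tendsto (fun k : ℕ => S (Nk (k+1)) x / E (Nk (k+1))) atTop (nhds 1) :=
      hsubconv.comp (tendsto_add_atTop_nat 1)
    simpa using hshift.mul hratio
  have hL := hfL.comp hkN_tendsto
  have hU := hfU.comp hkN_tendsto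
  refine tendsto_of_tendsto_of_tendsto_of_le_of_le' hL hU ?_ ?_
  · filter_upwards [hkN_tendsto.eventually_ge_atTop 1] with N hkge
    have h1 : Nk (kN N) ≤ N := hkN_le N
    have h2 : N ≤ Nk (kN N + 1) := le_of_lt (hkN_lt N)
    have hEk : 0 < E (Nk (kN N)) := hEposk (kN N) hkge
    have hEN : 0 < E N := lt_of_lt_of_le hEk (hEmono h1)
    have hEk1 : 0 < E (Nk (kN N + 1)) := lt_of_lt_of_le hEN (hEmono h2)
    show (S (Nk (kN N)) x / E (Nk (kN N))) * (E (Nk (kN N)) / E (Nk (kN N + 1)))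
      ≤ S N x / E N
    have hcancel : (S (Nk (kN N)) x / E (Nk (kN N))) * (E (Nk (kN N)) / E (Nk (kN N + 1)))
        = S (Nk (kN N)) x / E (Nk (kN N + 1)) := by
      rw [div_mul_div_comm, mul_comm (S (Nk (kN N)) x) (E (Nk (kN N))),
        mul_div_mul_left _ _ hEk.ne']
    rw [hcancel]
    exact div_le_div₀ (hS0 N x) (hSmono x h1) hEN (hEmono h2)
  · filter_upwards [hkN_tendsto.eventually_ge_atTop 1] with N hkge
    have h1 : Nk (kN N) ≤ N := hkN_le N
    have h2 : N ≤ Nk (kN N + 1) := le_of_lt (hkN_lt N)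
    have hEk : 0 < E (Nk (kN N)) := hEposk (kN N) hkge
    have hEN : 0 < E N := lt_of_lt_of_le hEk (hEmono h1)
    have hEk1 : 0 < E (Nk (kN N + 1)) := lt_of_lt_of_le hEN (hEmono h2)
    show S N x / E N
      ≤ (S (Nk (kN N + 1)) x / E (Nk (kN N + 1))) * (E (Nk (kN N + 1)) / E (Nk (kN N)))
    have hcancel : (S (Nk (kN N + 1)) x / E (Nk (kN N + 1))) * (E (Nk (kN N + 1)) / E (Nk (kN N)))
        = S (Nk (kN N + 1)) x / E (Nk (kN N)) := by
      rw [div_mul_div_comm, mul_comm (S (Nk (kN N + 1)) x) (E (Nk (kN N + 1))),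
        mul_div_mul_left _ _ hEk1.ne']
    rw [hcancel]
    exact div_le_div₀ (hS0 _ x) (hSmono x h2) hEk (hEmono h1)
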